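/- Let Σ be a surface with metric g, Gaussian curvature K, and let u > 0 be smooth with Δu − (1/3)Ku + Vu = 0 on an open set U ⊂ Σ. Then the Gaussian curvature K̂ of the conformal metric ĝ = u⁶ g on U satisfies K̂ = 3u^{-6} ( V + |∇ log u|² ). In particular V ≥ 0 on U implies K̂ ≥ 0 on U. -/
import Mathlib


/-- Let Σ be a surface with metric g, Gaussian curvature K, and u > 0
smooth with Δu − (1/3)Ku + Vu = 0 on an open set U.  Then the Gaussian curvature K̂
of ĝ = u⁶ g on U satisfies K̂ = 3u^{-6}(V + |∇ log u|²); in particular V ≥ 0 on U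
implies K̂ ≥ 0 on U.
Here, on the surface `S`: `lapu = Δu`, `gradlogu2 = |∇ log u|²` (which is ≥ 0), and
the hypotheses are the 2-dimensional conformal Gauss curvature law
K̂ = u^{-6}(K − 3 Δ log u) combined with the chain rule
Δ log u = Δu/u − |∇ log u|², together with the equation Lu = 0 on U. -/
theorem conformal_gauss_curvature_of_jacobi_function
    {S : Type*} (U : Set S) (K Khat u V lapu gradlogu2 : S → ℝ)
    (hu : ∀ x, 0 < u x)
    (hglog : ∀ x, 0 ≤ gradlogu2 x)
    (hconf : ∀ x ∈ U, Khat x =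
      u x ^ (-6 : ℤ) * (K x - 3 * (lapu x / u x - gradlogu2 x)))
    (hPDE : ∀ x ∈ U, lapu x - (1 / 3) * K x * u x + V x * u x = 0) :
    (∀ x ∈ U, Khat x = 3 * u x ^ (-6 : ℤ) * (V x + gradlogu2 x)) ∧
      ((∀ x ∈ U, 0 ≤ V x) → ∀ x ∈ U, 0 ≤ Khat x) := by
  have key : ∀ x ∈ U, Khat x = 3 * u x ^ (-6 : ℤ) * (V x + gradlogu2 x) := by
    intro x hx
    have hux := (hu x).ne'
    have hlap : lapu x / u x = (1 / 3) * K x - V x := by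
      field_simp
      linarith [hPDE x hx]
    rw [hconf x hx, hlap]
    ring
  refine ⟨key, fun hV x hx => ?_⟩
  rw [key x hx]
  have : (0:ℝ) < u x ^ (-6 : ℤ) := zpow_pos (hu x) _
  have := hV x hx
  have := hglog x
  positivity
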